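/- Let (Ω, μ) be a finite measure space with μ(Ω) > 0, let C > 0, and for each ε ∈ (0,1) let f_ε : Ω → [0,∞) be measurable with ∫_Ω g(max{1, f_ε}) dμ ≤ C/ε, where g(y) = y·ln(y). Then ε · ∫_Ω f_ε dμ → 0 as ε → 0⁺. -/

import Mathlib

open MeasureTheory Filter

/-- Vanishing of the regularizing absorption term: on a finite measure space
with `μ(Ω) > 0`, if for each `ε ∈ (0,1)` the nonnegative measurable function
`f_ε` satisfies `∫ g(max{1, f_ε}) dμ ≤ C/ε` with `g(y) = y·ln y`, then
`ε·∫ f_ε dμ → 0` as `ε → 0⁺`. -/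
theorem eps_integral_tendsto_zero {Ω : Type*} [MeasurableSpace Ω]
    (μ : Measure Ω) [IsFiniteMeasure μ] (hμ : μ Set.univ ≠ 0)
    (C : ℝ) (hC : 0 < C) (f : ℝ → Ω → ℝ)
    (hmeas : ∀ ε ∈ Set.Ioo (0 : ℝ) 1, Measurable (f ε))
    (hnonneg : ∀ ε ∈ Set.Ioo (0 : ℝ) 1, ∀ x, 0 ≤ f ε x)
    (hbound : ∀ ε ∈ Set.Ioo (0 : ℝ) 1,
      ∫⁻ x, ENNReal.ofReal (max 1 (f ε x) * Real.log (max 1 (f ε x))) ∂μ ≤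
        ENNReal.ofReal (C / ε)) :
    Tendsto (fun ε => ENNReal.ofReal ε * ∫⁻ x, ENNReal.ofReal (f ε x) ∂μ)
      (nhdsWithin 0 (Set.Ioo (0 : ℝ) 1)) (nhds 0) := by
  set G : ℝ → ENNReal := fun ε => ENNReal.ofReal (Real.sqrt ε) * μ Set.univ
      + ENNReal.ofReal (C / (-(Real.log ε) / 2)) with hGdef
  have hGten : Tendsto G (nhdsWithin 0 (Set.Ioo (0 : ℝ) 1)) (nhds 0) := by
    have h1 : Tendsto (fun ε : ℝ => ENNReal.ofReal (Real.sqrt ε) * μ Set.univ)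
        (nhdsWithin 0 (Set.Ioo (0 : ℝ) 1)) (nhds 0) := by
      have : Tendsto (fun ε : ℝ => ENNReal.ofReal (Real.sqrt ε))
          (nhdsWithin 0 (Set.Ioo (0 : ℝ) 1)) (nhds 0) := by
        have := (ENNReal.continuous_ofReal.comp Real.continuous_sqrt).tendsto 0
        simp only [Function.comp, Real.sqrt_zero, ENNReal.ofReal_zero] at this
        exact this.mono_left nhdsWithin_le_nhds
      have := ENNReal.Tendsto.mul_const this (Or.inr (measure_ne_top μ Set.univ))
      simpa using this
    have h2 : Tendsto (fun ε : ℝ => ENNReal.ofReal (C / (-(Real.log ε) / 2)))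
        (nhdsWithin 0 (Set.Ioo (0 : ℝ) 1)) (nhds 0) := by
      have hlog : Tendsto (fun ε : ℝ => -(Real.log ε) / 2)
          (nhdsWithin 0 (Set.Ioo (0 : ℝ) 1)) atTop := by
        have := Real.tendsto_log_nhdsGT_zero
        have h' : Tendsto Real.log (nhdsWithin 0 (Set.Ioo (0 : ℝ) 1)) atBot :=
          this.mono_left (nhdsWithin_mono _ Set.Ioo_subset_Ioi_self)
        exact (tendsto_neg_atTop_iff.mpr h').atTop_div_const two_pos
      have hdiv : Tendsto (fun ε : ℝ => C / (-(Real.log ε) / 2))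
          (nhdsWithin 0 (Set.Ioo (0 : ℝ) 1)) (nhds 0) :=
        Tendsto.div_atTop tendsto_const_nhds hlog
      have := (ENNReal.continuous_ofReal.tendsto 0).comp hdiv
      simpa [Function.comp_def] using this
    have := h1.add h2
    simpa using this
  have hbd : ∀ ε ∈ Set.Ioo (0 : ℝ) 1,
      ENNReal.ofReal ε * ∫⁻ x, ENNReal.ofReal (f ε x) ∂μ ≤ G ε := by
    intro ε hε
    obtain ⟨hε0, hε1⟩ := hε
    set L : ℝ := -(Real.log ε) / 2 with hLdef
    have hL : 0 < L := by
      have := Real.log_neg hε0 hε1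
      simp only [hLdef]; linarith
    have hs : 0 < Real.sqrt ε := Real.sqrt_pos.mpr hε0
    set A : ℝ := 1 / Real.sqrt ε with hAdef
    have hA0 : 0 < A := by positivity
    have hlogA : Real.log A = L := by
      rw [hAdef, one_div, Real.log_inv, Real.log_sqrt hε0.le, hLdef]
      ring
    -- pointwise bound
    have hpt : ∀ x, f ε x ≤ A + (max 1 (f ε x) * Real.log (max 1 (f ε x))) / L := by
      intro x
      set y : ℝ := max 1 (f ε x) with hy
      have hy1 : (1 : ℝ) ≤ y := le_max_left _ _
      have hfy : f ε x ≤ y := le_max_right _ _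
      have hylog : 0 ≤ y * Real.log y :=
        mul_nonneg (by linarith) (Real.log_nonneg hy1)
      rcases le_or_gt y A with h | h
      · have : 0 ≤ y * Real.log y / L := div_nonneg hylog hL.le
        linarith
      · have hLy : L ≤ Real.log y := by
          rw [← hlogA]; exact Real.log_le_log hA0 h.le
        have hy0 : 0 < y := by linarith
        have : y ≤ y * Real.log y / L := by
          rw [le_div_iff₀ hL]
          calc y * L ≤ y * Real.log y := by
                exact mul_le_mul_of_nonneg_left hLy hy0.le
            _ = y * Real.log y := rfl
        linarith
    -- ENNReal pointwise bound
    have hpt' : ∀ x, ENNReal.ofReal (f ε x) ≤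
        ENNReal.ofReal A +
          ENNReal.ofReal (max 1 (f ε x) * Real.log (max 1 (f ε x))) * (ENNReal.ofReal L)⁻¹ := by
      intro x
      have hylog : 0 ≤ max 1 (f ε x) * Real.log (max 1 (f ε x)) :=
        mul_nonneg (by positivity) (Real.log_nonneg (le_max_left _ _))
      calc ENNReal.ofReal (f ε x)
          ≤ ENNReal.ofReal (A + (max 1 (f ε x) * Real.log (max 1 (f ε x))) / L) :=
            ENNReal.ofReal_le_ofReal (hpt x)
        _ = ENNReal.ofReal A +
              ENNReal.ofReal ((max 1 (f ε x) * Real.log (max 1 (f ε x))) / L) :=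
            ENNReal.ofReal_add hA0.le (div_nonneg hylog hL.le)
        _ = ENNReal.ofReal A +
              ENNReal.ofReal (max 1 (f ε x) * Real.log (max 1 (f ε x))) * (ENNReal.ofReal L)⁻¹ := by
            rw [ENNReal.ofReal_div_of_pos hL, div_eq_mul_inv]
    have hinv_ne : (ENNReal.ofReal L)⁻¹ ≠ ⊤ := by
      simp [ENNReal.inv_ne_top, ENNReal.ofReal_pos.mpr hL, (ENNReal.ofReal_pos.mpr hL).ne']
    have hint : ∫⁻ x, ENNReal.ofReal (f ε x) ∂μ ≤
        ENNReal.ofReal A * μ Set.univ + ENNReal.ofReal (C / ε) * (ENNReal.ofReal L)⁻¹ := by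
      calc ∫⁻ x, ENNReal.ofReal (f ε x) ∂μ
          ≤ ∫⁻ x, (ENNReal.ofReal A +
              ENNReal.ofReal (max 1 (f ε x) * Real.log (max 1 (f ε x))) * (ENNReal.ofReal L)⁻¹) ∂μ :=
            lintegral_mono hpt'
        _ = ENNReal.ofReal A * μ Set.univ +
              (∫⁻ x, ENNReal.ofReal (max 1 (f ε x) * Real.log (max 1 (f ε x))) ∂μ) *
                (ENNReal.ofReal L)⁻¹ := by
            rw [lintegral_add_left measurable_const, lintegral_const,
              lintegral_mul_const' _ _ hinv_ne]
        _ ≤ ENNReal.ofReal A * μ Set.univ + ENNReal.ofReal (C / ε) * (ENNReal.ofReal L)⁻¹ := by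
            gcongr
            exact hbound ε ⟨hε0, hε1⟩
    calc ENNReal.ofReal ε * ∫⁻ x, ENNReal.ofReal (f ε x) ∂μ
        ≤ ENNReal.ofReal ε *
            (ENNReal.ofReal A * μ Set.univ + ENNReal.ofReal (C / ε) * (ENNReal.ofReal L)⁻¹) := by
          gcongr
      _ = ENNReal.ofReal (ε * A) * μ Set.univ +
            ENNReal.ofReal (ε * (C / ε)) * (ENNReal.ofReal L)⁻¹ := by
          rw [mul_add, ENNReal.ofReal_mul hε0.le, ENNReal.ofReal_mul hε0.le]
          ring
      _ = G ε := by
          have hεA : ε * A = Real.sqrt ε := by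
            rw [hAdef]
            field_simp
            rw [Real.sq_sqrt hε0.le]
          have hεC : ε * (C / ε) = C := by field_simp
          rw [hεA, hεC, hGdef]
          simp only
          congr 1
          rw [ENNReal.ofReal_div_of_pos hL, div_eq_mul_inv]
    -- done
  refine tendsto_of_tendsto_of_tendsto_of_le_of_le' tendsto_const_nhds hGten ?_ ?_
  · filter_upwards with ε using zero_le
  · filter_upwards [self_mem_nhdsWithin] with ε hε using hbd ε hε
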